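/- For n = 2 and matrices Aᵢ = [[-a^i₁₂, a^i₁₂],[a^i₂₁, -a^i₂₁]] with a^i₁₂, a^i₂₁ ≥ 0, ordered so that tr(A₁) ≤ ... ≤ tr(A_r): for any measurable control u: [0,T] → ℝʳ with uᵢ(t) ≥ 0 and Σᵢuᵢ(t) = 1, the solution of ẋ = (Σᵢ uᵢAᵢ)x satisfies V(x(T)) = V(x₀)·exp(2Σᵢ tr(Aᵢ)∫₀ᵀ uᵢ(t)dt). Consequently, if tr(A₁) < tr(A₂), the constant control u ≡ e¹ (first standard basis vector) minimizes V(x(T)) over all admissible controls. -/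

import Mathlib

open Matrix MeasureTheory intervalIntegral Set

set_option maxHeartbeats 1000000

lemma key17 (T : ℝ) (hT : 0 < T) (c w : ℝ → ℝ) (M : ℝ)
    (hbound : ∀ t, |c t| ≤ M)
    (hcint : IntervalIntegrable c volume 0 T)
    (hw : ∀ t, HasDerivAt w (c t * w t) t) :
    (w T)^2 = (w 0)^2 * Real.exp (∫ t in (0:ℝ)..T, 2 * c t) := by
  have hM : 0 ≤ M := le_trans (abs_nonneg _) (hbound 0)
  have hwc : Continuous w := by
    rw [continuous_iff_continuousAt]; exact fun t => (hw t).continuousAt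
  by_cases h0 : w 0 = 0
  · have hz : ∀ t ∈ Icc (0:ℝ) T, ‖w t‖ ≤ gronwallBound 0 M 0 (t - 0) := by
      apply norm_le_gronwallBound_of_norm_deriv_right_le hwc.continuousOn
        (fun t _ => (hw t).hasDerivWithinAt)
      · simp [h0]
      · intro t _
        rw [Real.norm_eq_abs, Real.norm_eq_abs, abs_mul]
        have := hbound t
        nlinarith [abs_nonneg (w t), abs_nonneg (c t)]
    have hwT : w T = 0 := by
      have h := hz T ⟨hT.le, le_rfl⟩
      rw [gronwallBound_ε0_δ0] at h
      simpa using h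
    simp [hwT, h0]
  · have hne : ∀ t ∈ Icc (0:ℝ) T, w t ≠ 0 := by
      intro t₁ ht₁ hwt₁
      apply h0
      set g : ℝ → ℝ := fun s => w (t₁ - s) with hg
      have hg' : ∀ s, HasDerivAt g (-c (t₁ - s) * g s) s := by
        intro s
        have h1 : HasDerivAt (fun s : ℝ => t₁ - s) (-1) s := by
          simpa using (hasDerivAt_id s).const_sub t₁
        have := (hw (t₁ - s)).comp s h1
        simpa [hg, Function.comp_def] using this.congr_deriv (by ring)
      have hz : ∀ s ∈ Icc (0:ℝ) t₁, ‖g s‖ ≤ gronwallBound 0 M 0 (s - 0) := by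
        apply norm_le_gronwallBound_of_norm_deriv_right_le
          (Continuous.continuousOn (by continuity))
          (fun s _ => (hg' s).hasDerivWithinAt)
        · simp [hg, hwt₁]
        · intro s _
          rw [Real.norm_eq_abs, Real.norm_eq_abs, abs_mul, abs_neg]
          have := hbound (t₁ - s)
          nlinarith [abs_nonneg (g s), abs_nonneg (c (t₁ - s))]
      have h := hz t₁ ⟨ht₁.1, le_rfl⟩
      rw [gronwallBound_ε0_δ0] at h
      simpa [hg] using h
    have hderiv : ∀ t ∈ uIcc (0:ℝ) T,
        HasDerivAt (fun t => Real.log (w t ^ 2)) (2 * c t) t := by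
      intro t ht
      rw [uIcc_of_le hT.le] at ht
      have hwt := hne t ht
      have hsq : HasDerivAt (fun t => w t ^ 2) (2 * w t * (c t * w t)) t := by
        simpa using ((hw t).fun_pow 2)
      have hlog := (Real.hasDerivAt_log (pow_ne_zero 2 hwt)).comp t hsq
      refine hlog.congr_deriv ?_
      field_simp
    have hint2 : IntervalIntegrable (fun t => 2 * c t) volume 0 T := hcint.const_mul 2
    have hFTC := integral_eq_sub_of_hasDerivAt hderiv hint2
    have hwT := hne T ⟨hT.le, le_rfl⟩
    have h1 : Real.exp (∫ t in (0:ℝ)..T, 2 * c t) = w T ^ 2 / w 0 ^ 2 := by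
      rw [hFTC, Real.exp_sub, Real.exp_log (by positivity), Real.exp_log (by positivity)]
    rw [h1]
    field_simp

theorem stmt_17 (r : ℕ) (hr : 2 ≤ r) (T : ℝ) (hT : 0 < T)
    (a12 a21 : Fin r → ℝ) (ha12 : ∀ i, 0 ≤ a12 i) (ha21 : ∀ i, 0 ≤ a21 i)
    (A : Fin r → Matrix (Fin 2) (Fin 2) ℝ)
    (hAdef : ∀ i, A i = !![-(a12 i), a12 i; a21 i, -(a21 i)])
    (hord : ∀ i j : Fin r, i ≤ j → (A i).trace ≤ (A j).trace)
    (u : ℝ → Fin r → ℝ) (humeas : ∀ i, Measurable fun t => u t i)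
    (hunn : ∀ t i, 0 ≤ u t i) (husum : ∀ t, ∑ i, u t i = 1)
    (x : ℝ → Fin 2 → ℝ)
    (hx : ∀ t : ℝ, HasDerivAt x ((∑ i, u t i • A i).mulVec (x t)) t) :
    let P : Matrix (Fin 2) (Fin 2) ℝ :=
      1 - (2 : ℝ)⁻¹ • Matrix.of (fun _ _ => (1 : ℝ))
    let V : (Fin 2 → ℝ) → ℝ := fun y => y ⬝ᵥ P.mulVec y
    V (x T) = V (x 0) *
        Real.exp (2 * ∑ i, (A i).trace * ∫ t in (0 : ℝ)..T, u t i) ∧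
      ((A ⟨0, by omega⟩).trace < (A ⟨1, by omega⟩).trace →
        ∀ y : ℝ → Fin 2 → ℝ,
          (∀ t : ℝ, HasDerivAt y ((A ⟨0, by omega⟩).mulVec (y t)) t) →
          y 0 = x 0 → V (y T) ≤ V (x T)) := by
  intro P V
  have hV : ∀ y : Fin 2 → ℝ, V y = (y 0 - y 1)^2 / 2 := by
    intro y
    show y ⬝ᵥ ((1 - (2:ℝ)⁻¹ • Matrix.of (fun _ _ => (1:ℝ))).mulVec y) = _
    simp [Matrix.mulVec, dotProduct, Fin.sum_univ_two, Matrix.one_apply,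
      Matrix.sub_apply, Matrix.smul_apply, Matrix.of_apply, smul_eq_mul]
    ring
  have htr : ∀ i, (A i).trace = -(a12 i + a21 i) := by
    intro i
    rw [hAdef]
    simp [Matrix.trace, Matrix.diag, Fin.sum_univ_two]
    ring
  set c : ℝ → ℝ := fun t => ∑ i, u t i * (A i).trace with hc
  set w : ℝ → ℝ := fun t => x t 0 - x t 1 with hwdef
  -- derivative of the components
  have hcomp : ∀ (z : ℝ → Fin 2 → ℝ) (B : ℝ → Matrix (Fin 2) (Fin 2) ℝ),
      (∀ t, HasDerivAt z ((B t).mulVec (z t)) t) →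
      ∀ (t : ℝ) (j : Fin 2), HasDerivAt (fun t => z t j) (((B t).mulVec (z t)) j) t := by
    intro z B hz t j
    exact (ContinuousLinearMap.proj j : (Fin 2 → ℝ) →L[ℝ] ℝ).hasFDerivAt.comp_hasDerivAt t (hz t)
  have hval : ∀ t, (((∑ i, u t i • A i).mulVec (x t)) 0 - ((∑ i, u t i • A i).mulVec (x t)) 1)
      = c t * w t := by
    intro t
    simp only [hc, hwdef, Matrix.mulVec, dotProduct, Fin.sum_univ_two, Matrix.sum_apply,
      Finset.sum_apply, Matrix.smul_apply, smul_eq_mul, hAdef, Matrix.trace_fin_two_of,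
      Matrix.cons_val', Matrix.cons_val_zero,
      Matrix.cons_val_one, Matrix.head_cons, Matrix.empty_val', Matrix.cons_val_fin_one,
      Matrix.of_apply, htr, Finset.sum_mul]
    rw [← Finset.sum_add_distrib, ← Finset.sum_add_distrib, ← Finset.sum_sub_distrib]
    refine Finset.sum_congr rfl fun i _ => by simp [Matrix.vecHead]; ring
  have hw : ∀ t, HasDerivAt w (c t * w t) t := by
    intro t
    have := (hcomp x (fun t => ∑ i, u t i • A i) hx t 0).sub (hcomp x _ hx t 1)
    rw [hval t] at this
    exact this
  -- bounds and integrability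
  have hu1 : ∀ t i, u t i ≤ 1 := by
    intro t i
    calc u t i ≤ ∑ j, u t j := Finset.single_le_sum (fun j _ => hunn t j) (Finset.mem_univ i)
    _ = 1 := husum t
  have huint : ∀ i, IntervalIntegrable (fun t => u t i) volume 0 T := by
    intro i
    refine (_root_.intervalIntegrable_const (c := (1:ℝ))).mono_fun'
      ((humeas i).aestronglyMeasurable).restrict ?_
    filter_upwards with t
    rw [Real.norm_eq_abs, abs_of_nonneg (hunn t i)]
    exact hu1 t i
  have hcint : IntervalIntegrable c volume 0 T := by
    rw [hc]
    have h := IntervalIntegrable.sum (μ := volume) (a := (0:ℝ)) (b := T) Finset.univ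
      (f := fun i t => u t i * (A i).trace) (fun i _ => (huint i).mul_const _)
    rwa [Finset.sum_fn] at h
  have hbound : ∀ t, |c t| ≤ ∑ i, |(A i).trace| := by
    intro t
    calc |c t| ≤ ∑ i, |u t i * (A i).trace| := Finset.abs_sum_le_sum_abs _ _
    _ ≤ ∑ i, |(A i).trace| := by
        refine Finset.sum_le_sum fun i _ => ?_
        rw [abs_mul, abs_of_nonneg (hunn t i)]
        nlinarith [hu1 t i, abs_nonneg ((A i).trace), hunn t i]
  have hkey := key17 T hT c w _ hbound hcint hw
  -- integral computation
  have hintc : (∫ t in (0:ℝ)..T, 2 * c t) = 2 * ∑ i, (A i).trace * ∫ t in (0:ℝ)..T, u t i := by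
    rw [intervalIntegral.integral_const_mul]
    congr 1
    rw [hc]
    rw [intervalIntegral.integral_finset_sum (fun i _ => (huint i).mul_const _)]
    refine Finset.sum_congr rfl fun i _ => ?_
    rw [intervalIntegral.integral_mul_const, mul_comm]
  have hpart1 : V (x T) = V (x 0) *
      Real.exp (2 * ∑ i, (A i).trace * ∫ t in (0 : ℝ)..T, u t i) := by
    rw [hV, hV, ← hintc]
    show w T ^ 2 / 2 = w 0 ^ 2 / 2 * Real.exp _
    rw [hkey]; ring
  refine ⟨hpart1, ?_⟩
  intro _ y hy hy0
  set i0 : Fin r := ⟨0, by omega⟩ with hi0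
  set w2 : ℝ → ℝ := fun t => y t 0 - y t 1 with hw2def
  have hval2 : ∀ t, (((A i0).mulVec (y t)) 0 - ((A i0).mulVec (y t)) 1)
      = (A i0).trace * w2 t := by
    intro t
    simp only [hw2def, Matrix.mulVec, dotProduct, Fin.sum_univ_two, hAdef, htr,
      Matrix.cons_val', Matrix.cons_val_zero, Matrix.cons_val_one, Matrix.head_cons,
      Matrix.empty_val', Matrix.cons_val_fin_one, Matrix.of_apply]
    simp [Matrix.vecHead, Matrix.trace_fin_two_of]
    ring
  have hw2 : ∀ t, HasDerivAt w2 ((A i0).trace * w2 t) t := by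
    intro t
    have := (hcomp y (fun _ => A i0) hy t 0).sub (hcomp y _ hy t 1)
    rw [hval2 t] at this
    exact this
  have hkey2 := key17 T hT (fun _ => (A i0).trace) w2 |(A i0).trace|
    (fun _ => le_rfl) _root_.intervalIntegrable_const hw2
  have hintc2 : (∫ _t in (0:ℝ)..T, 2 * (A i0).trace) = 2 * ((A i0).trace * T) := by
    rw [intervalIntegral.integral_const]
    simp [smul_eq_mul]
    ring
  rw [hintc2] at hkey2
  -- compare exponents
  have hsumT : ∑ i, (∫ t in (0:ℝ)..T, u t i) = T := by
    rw [← intervalIntegral.integral_finset_sum (fun i _ => huint i)]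
    simp [husum]
  have hexp : (A i0).trace * T ≤ ∑ i, (A i).trace * ∫ t in (0:ℝ)..T, u t i := by
    calc (A i0).trace * T = ∑ i, (A i0).trace * ∫ t in (0:ℝ)..T, u t i := by
          rw [← Finset.mul_sum, hsumT]
    _ ≤ ∑ i, (A i).trace * ∫ t in (0:ℝ)..T, u t i := by
        refine Finset.sum_le_sum fun i _ => ?_
        refine mul_le_mul_of_nonneg_right (hord i0 i (Fin.mk_le_mk.mpr (Nat.zero_le _)))
          (intervalIntegral.integral_nonneg hT.le fun t _ => hunn t i)
  have hy0' : w2 0 = w 0 := by show y 0 0 - y 0 1 = x 0 0 - x 0 1; rw [hy0]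
  rw [hpart1, hV, hV]
  show w2 T ^ 2 / 2 ≤ w 0 ^ 2 / 2 * Real.exp _
  rw [hkey2, hy0']
  have h1 : Real.exp (2 * ((A i0).trace * T)) ≤
      Real.exp (2 * ∑ i, (A i).trace * ∫ t in (0:ℝ)..T, u t i) :=
    Real.exp_le_exp.mpr (by linarith)
  nlinarith [sq_nonneg (w 0), Real.exp_pos (2 * ((A i0).trace * T))]
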